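/- Let N ≥ 1 be an integer, let τ > 0, let t_0, …, t_N be N+1 pairwise distinct points in [0, τ], and let 𝔐 be the (N+1)×(N+1) matrix with entries 𝔐_{ij} = b_{i,N}(t_j/τ). Let C ⊆ ℝ^n be a convex set, let p : ℝ → ℝ^n have all coordinates polynomial of degree at most N, and let W ∈ ℝ^{n×(N+1)} be the matrix whose j-th column is p(t_j). If every column of W · 𝔐^{-1} belongs to C, then p(t) ∈ C for all t ∈ [0, τ]. -/

import Mathlib

/-- The Bernstein basis polynomial `b_{j,N}(x) = (N choose j) x^j (1-x)^(N-j)`. -/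
noncomputable def bern (N j : ℕ) (x : ℝ) : ℝ :=
  (N.choose j : ℝ) * x ^ j * (1 - x) ^ (N - j)

open Polynomial bernsteinPolynomial

theorem bernR_linearIndependent_aux (n k : ℕ) (h : k ≤ n + 1) :
    LinearIndependent ℝ fun ν : Fin k => bernsteinPolynomial ℝ n ν := by
  induction' k with k ih
  · apply linearIndependent_empty_type
  · apply linearIndependent_fin_succ'.mpr
    fconstructor
    · exact ih (le_of_lt h)
    · clear ih
      simp only [Nat.succ_eq_add_one, add_le_add_iff_right] at h
      simp only [Fin.val_last, Fin.init_def]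
      dsimp
      apply Submodule.notMem_span_of_apply_notMem_span_image
        (@Polynomial.derivative ℝ _ ^ (n - k))
      simp only [not_exists, not_and, Submodule.mem_map, Submodule.span_image _]
      intro p m
      apply_fun Polynomial.eval (1 : ℝ)
      simp only [Module.End.pow_apply]
      suffices (Polynomial.derivative^[n - k] p).eval 1 = 0 by
        rw [this]
        exact (iterate_derivative_at_1_ne_zero ℝ n k h).symm
      refine Submodule.span_induction ?_ ?_ ?_ ?_ m
      · simp only [Set.mem_range, forall_exists_index, forall_apply_eq_imp_iff]
        rintro ⟨a, w⟩; simp only [Fin.val_mk]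
        rw [iterate_derivative_at_1_eq_zero_of_lt ℝ n ((tsub_lt_tsub_iff_left_of_le h).mpr w)]
      · simp
      · intro x y _ _ hx hy; simp [hx, hy]
      · intro a x _ h; simp [h]

theorem bernR_linearIndependent (n : ℕ) :
    LinearIndependent ℝ fun ν : Fin (n + 1) => bernsteinPolynomial ℝ n ν :=
  bernR_linearIndependent_aux n (n + 1) le_rfl

theorem bern_eval (N j : ℕ) (x : ℝ) : (bernsteinPolynomial ℝ N j).eval x = bern N j x := by
  simp [bernsteinPolynomial, bern]

theorem bern_natDegree_le (n ν : ℕ) (h : ν ≤ n) :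
    (bernsteinPolynomial ℝ n ν).natDegree ≤ n := by
  unfold bernsteinPolynomial
  calc (Polynomial.C (n.choose ν : ℝ) * Polynomial.X ^ ν *
        (1 - Polynomial.X) ^ (n - ν)).natDegree
      ≤ (Polynomial.C (n.choose ν : ℝ) * Polynomial.X ^ ν).natDegree +
        ((1 - Polynomial.X : Polynomial ℝ) ^ (n - ν)).natDegree := natDegree_mul_le
    _ ≤ ν + (n - ν) := by
        gcongr
        · calc (Polynomial.C (n.choose ν : ℝ) * Polynomial.X ^ ν).natDegree
              ≤ (Polynomial.C (n.choose ν : ℝ)).natDegree +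
                (Polynomial.X ^ ν : Polynomial ℝ).natDegree := natDegree_mul_le
            _ ≤ ν := by simp
        · calc ((1 - Polynomial.X : Polynomial ℝ) ^ (n - ν)).natDegree
              ≤ (n - ν) * (1 - Polynomial.X : Polynomial ℝ).natDegree :=
                natDegree_pow_le
            _ ≤ (n - ν) * 1 := by
                gcongr
                exact (natDegree_sub_le _ _).trans (by simp)
            _ = n - ν := mul_one _
    _ = n := Nat.add_sub_cancel' h

/-- With `𝔐 i j = b_{i,N}(t_j/τ)` for pairwise distinct nodes
`t_0, …, t_N ∈ [0,τ]`, let `C ⊆ ℝ^n` be convex, let `p : ℝ → ℝ^n` have polynomial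
coordinates of degree at most `N`, and let `W` have `j`-th column `p(t_j)`. If every
column of `W ⬝ 𝔐⁻¹` belongs to `C`, then `p(t) ∈ C` for all `t ∈ [0, τ]`. -/
theorem mem_of_bernstein_control_points_mem
    (N n : ℕ) (hN : 1 ≤ N) (τ : ℝ) (hτ : 0 < τ)
    (t : Fin (N + 1) → ℝ) (ht : Function.Injective t)
    (htmem : ∀ j, t j ∈ Set.Icc (0 : ℝ) τ)
    (M : Matrix (Fin (N + 1)) (Fin (N + 1)) ℝ)
    (hM : ∀ i j, M i j = bern N i.val (t j / τ))
    (C : Set (Fin n → ℝ)) (hC : Convex ℝ C)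
    (p : ℝ → Fin n → ℝ)
    (hp : ∀ i : Fin n, ∃ q : Polynomial ℝ, q.degree ≤ N ∧ ∀ s : ℝ, p s i = q.eval s)
    (W : Matrix (Fin n) (Fin (N + 1)) ℝ)
    (hW : ∀ (r : Fin n) (j : Fin (N + 1)), W r j = p (t j) r)
    (hcol : ∀ j : Fin (N + 1), (fun r : Fin n => (W * M⁻¹) r j) ∈ C) :
    ∀ s ∈ Set.Icc (0 : ℝ) τ, p s ∈ C := by
  have hτ' : τ ≠ 0 := ne_of_gt hτ
  set x : Fin (N + 1) → ℝ := fun j => t j / τ with hx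
  have hxinj : Function.Injective x := by
    intro a b hab
    exact ht (by simp only [hx] at hab; exact (div_left_inj' hτ').mp hab)
  -- zero lemma
  have hzero : ∀ f : Polynomial ℝ, f.natDegree ≤ N → (∀ j, f.eval (x j) = 0) → f = 0 := by
    intro f hdeg heval
    exact f.eq_zero_of_natDegree_lt_card_of_eval_eq_zero hxinj heval
      (by simpa using Nat.lt_succ_of_le hdeg)
  -- M is invertible
  have hker : ∀ c : Fin (N + 1) → ℝ, Matrix.vecMul c M = 0 → c = 0 := by
    intro c hc
    set P : Polynomial ℝ := ∑ i, Polynomial.C (c i) * bernsteinPolynomial ℝ N i with hP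
    have hPdeg : P.natDegree ≤ N := by
      refine (Polynomial.natDegree_sum_le _ _).trans ?_
      refine (Finset.fold_max_le _).mpr ⟨Nat.zero_le _, fun i _ => ?_⟩
      exact (natDegree_mul_le).trans (by
        simpa using bern_natDegree_le N i (Nat.lt_succ_iff.mp i.isLt))
    have hPeval : ∀ j, P.eval (x j) = 0 := by
      intro j
      have := congrFun hc j
      simp only [Matrix.vecMul, dotProduct, Pi.zero_apply] at this
      simpa [hP, Polynomial.eval_finset_sum, bern_eval, hM, hx] using this
    have hP0 : P = 0 := hzero P hPdeg hPeval
    have := Fintype.linearIndependent_iff.mp (bernR_linearIndependent N) c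
      (by simpa [hP, Polynomial.smul_eq_C_mul] using hP0)
    funext i; exact this i
  have hinj : Function.Injective M.vecMul := by
    intro a b hab
    have hab' : Matrix.vecMul a M = Matrix.vecMul b M := hab
    have := hker (a - b) (by rw [Matrix.sub_vecMul, hab', sub_self])
    exact sub_eq_zero.mp this
  have hdet : IsUnit M.det :=
    (Matrix.isUnit_iff_isUnit_det M).mp (Matrix.vecMul_injective_iff_isUnit.mp hinj)
  set c : Matrix (Fin n) (Fin (N + 1)) ℝ := W * M⁻¹ with hc
  have hWc : c * M = W := by
    rw [hc, Matrix.mul_assoc, Matrix.nonsing_inv_mul M hdet, Matrix.mul_one]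
  -- coordinate representation
  have hrep : ∀ (r : Fin n) (y : ℝ), p (τ * y) r = ∑ i, c r i * bern N i.val y := by
    intro r y
    obtain ⟨q, hqdeg, hqeval⟩ := hp r
    have hqnat : q.natDegree ≤ N := Polynomial.natDegree_le_iff_degree_le.mpr hqdeg
    set g : Polynomial ℝ := q.comp (Polynomial.C τ * Polynomial.X) with hg
    have hgdeg : g.natDegree ≤ N := by
      refine (Polynomial.natDegree_comp_le).trans ?_
      calc q.natDegree * (Polynomial.C τ * Polynomial.X).natDegree
          ≤ N * 1 := by
            gcongr
            exact (natDegree_mul_le).trans (by simp)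
        _ = N := mul_one N
    set f : Polynomial ℝ := g - ∑ i, Polynomial.C (c r i) * bernsteinPolynomial ℝ N i with hf
    have hfdeg : f.natDegree ≤ N := by
      refine (Polynomial.natDegree_sub_le _ _).trans (max_le hgdeg ?_)
      refine (Polynomial.natDegree_sum_le _ _).trans ?_
      refine (Finset.fold_max_le _).mpr ⟨Nat.zero_le _, fun i _ => ?_⟩
      exact (natDegree_mul_le).trans (by
        simpa using bern_natDegree_le N i (Nat.lt_succ_iff.mp i.isLt))
    have hfeval : ∀ j, f.eval (x j) = 0 := by
      intro j
      have h1 : g.eval (x j) = q.eval (t j) := by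
        simp [hg, Polynomial.eval_comp, hx, mul_div_cancel₀ _ hτ']
      have h2 : q.eval (t j) = ∑ i, c r i * bern N i.val (x j) := by
        rw [← hqeval, ← hW r j, ← hWc]
        simp [Matrix.mul_apply, hM, hx]
      simp [hf, Polynomial.eval_finset_sum, bern_eval, h1, h2]
    have hf0 : f = 0 := hzero f hfdeg hfeval
    have : g.eval y = ∑ i, c r i * bern N i.val y := by
      have := congrArg (Polynomial.eval y) hf0
      simpa [hf, Polynomial.eval_finset_sum, bern_eval, sub_eq_zero] using this
    rw [← this, hg]
    simp [Polynomial.eval_comp, hqeval]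
  -- finish
  intro s hs
  have hy : s / τ ∈ Set.Icc (0 : ℝ) 1 :=
    ⟨div_nonneg hs.1 hτ.le, (div_le_one hτ).mpr hs.2⟩
  set y := s / τ with hy'
  have hsum1 : ∑ i : Fin (N + 1), bern N i.val y = 1 := by
    have := congrArg (Polynomial.eval y) (bernsteinPolynomial.sum ℝ N)
    simp only [Polynomial.eval_finset_sum, Polynomial.eval_one] at this
    rw [Fin.sum_univ_eq_sum_range (fun i => bern N i y)]
    simpa [bern_eval] using this
  have hnonneg : ∀ i : Fin (N + 1), 0 ≤ bern N i.val y := by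
    intro i
    unfold bern
    have h1 : (0:ℝ) ≤ y := hy.1
    have h2 : (0:ℝ) ≤ 1 - y := by linarith [hy.2]
    positivity
  have hmem : ∑ i : Fin (N + 1), bern N i.val y • (fun r => c r i : Fin n → ℝ) ∈ C :=
    hC.sum_mem (fun i _ => hnonneg i) (by simpa using hsum1) (fun i _ => hcol i)
  have : p s = ∑ i : Fin (N + 1), bern N i.val y • (fun r => c r i : Fin n → ℝ) := by
    funext r
    have hs' : p s r = p (τ * y) r := by rw [hy', mul_div_cancel₀ _ hτ']
    rw [hs', hrep r y]
    simp [Finset.sum_apply, mul_comm]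
  rw [this]
  exact hmem
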